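/- arXiv:2303.10194 — 11 statements merged into one kernel-verified Lean document; each statement's English description precedes it below -/
import Mathlib

section
/- For any function f : S → X from a nonempty set S to a topological space X, and any ideals I and K on S, the set of I^K-cluster points of f is a closed subset of X. -/
open Set Topology

attribute [local instance] Classical.propDecidable

variable {S X : Type*}

/-- An ideal on a set: family of subsets closed under subsets and finite unions. -/
def IsIdeal (I : Set (Set S)) : Prop :=
  ∅ ∈ I ∧ (∀ ⦃A B : Set S⦄, A ∈ I → B ⊆ A → B ∈ I) ∧
    ∀ ⦃A B : Set S⦄, A ∈ I → B ∈ I → A ∪ B ∈ I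

/-- An admissible ideal: nontrivial ideal containing all singletons. -/
def IsAdmissible (I : Set (Set S)) : Prop :=
  IsIdeal I ∧ Set.univ ∉ I ∧ ∀ s : S, {s} ∈ I

/-- `x` is an `I^K`-cluster point of `f`: there is `M ∈ F(I)` (i.e. `Mᶜ ∈ I`) such that
the function equal to `f` on `M` and constantly `x` off `M` has `x` as a `K`-cluster point. -/
def IKClusterPt [TopologicalSpace X] (I K : Set (Set S)) (f : S → X) (x : X) : Prop :=
  ∃ M : Set S, Mᶜ ∈ I ∧ ∀ U : Set X, IsOpen U → x ∈ U →
    {s : S | (if s ∈ M then f s else x) ∈ U} ∉ K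

theorem closed_IKClusterPts [TopologicalSpace X] [Nonempty S]
    (I K : Set (Set S)) (hI : IsIdeal I) (hK : IsIdeal K) (f : S → X) :
    IsClosed {x : X | IKClusterPt I K f x} := by
  by_cases hIK : ∀ A ∈ I, A ∈ K
  · have hset : {x : X | IKClusterPt I K f x} =
        {x : X | ∀ U : Set X, IsOpen U → x ∈ U → {s : S | f s ∈ U} ∉ K} := by
      ext x
      constructor
      · rintro ⟨M, hM, h⟩ U hU hxU hfU
        refine h U hU hxU (hK.2.1 (hK.2.2 hfU (hIK _ hM)) ?_)
        intro s hs
        by_cases hsM : s ∈ M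
        · left; simpa [hsM] using hs
        · right; simpa using hsM
      · intro h
        refine ⟨Set.univ, by simpa using hI.1, fun U hU hxU => ?_⟩
        simpa using h U hU hxU
    rw [hset, ← isOpen_compl_iff, isOpen_iff_forall_mem_open]
    intro x hx
    simp only [mem_compl_iff, mem_setOf_eq, not_forall] at hx
    push_neg at hx
    obtain ⟨U, hU, hxU, hfU⟩ := hx
    refine ⟨U, fun y hy hy' => ?_, hU, hxU⟩
    exact hy' U hU hy hfU
  · push_neg at hIK
    obtain ⟨A, hAI, hAK⟩ := hIK
    have : {x : X | IKClusterPt I K f x} = Set.univ := by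
      ext x
      simp only [mem_setOf_eq, mem_univ, iff_true]
      refine ⟨Aᶜ, by simpa using hAI, fun U hU hxU hmem => ?_⟩
      refine hAK (hK.2.1 hmem ?_)
      intro s hs
      simp only [mem_setOf_eq, if_neg (fun h : s ∈ Aᶜ => h hs)]
      exact hxU
    rw [this]
    exact isClosed_univ
end

section
/- Let X be a topological space with a countable dense subset in every closed set (completely separable, i.e., second countable), S a nonempty set, and I, K ideals on S with I ⊆ K. Suppose there exists a sequence (T_p)_{p∈ℕ} of pairwise disjoint subsets of S with T_p ∉ K for all p. Then for every nonempty closed set C ⊆ X there is a function f : S → X with C_f(I^K) = C. -/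
open Set Topology

attribute [local instance] Classical.propDecidable

variable {S X : Type*}

theorem closed_eq_IKClusterPts [TopologicalSpace X] [SecondCountableTopology X] [Nonempty S]
    (I K : Set (Set S)) (hI : IsIdeal I) (hK : IsIdeal K) (hIK : I ⊆ K)
    (T : ℕ → Set S) (hdisj : ∀ i j, i ≠ j → T i ∩ T j = ∅) (hT : ∀ p, T p ∉ K)
    (C : Set X) (hCne : C.Nonempty) (hC : IsClosed C) :
    ∃ f : S → X, {x : X | IKClusterPt I K f x} = C := by
  have hCne' : Nonempty C := hCne.to_subtype
  obtain ⟨D, hDc, hDd⟩ := TopologicalSpace.exists_countable_dense C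
  obtain ⟨u, hu⟩ := hDc.exists_eq_range hDd.nonempty
  set g : ℕ → X := fun p => (u p : X) with hg
  have hgC : ∀ p, g p ∈ C := fun p => (u p).2
  set f : S → X := fun s => if h : ∃ p, s ∈ T p then g (Nat.find h) else g 0 with hf
  have hfC : ∀ s, f s ∈ C := by
    intro s
    simp only [hf]
    split <;> exact hgC _
  have hfT : ∀ p s, s ∈ T p → f s = g p := by
    intro p s hs
    have h : ∃ q, s ∈ T q := ⟨p, hs⟩
    have hq : s ∈ T (Nat.find h) := Nat.find_spec h
    have : Nat.find h = p := by
      by_contra hne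
      have := hdisj _ _ hne
      exact absurd (Set.mem_inter hq hs) (by rw [this]; exact notMem_empty s)
    simp only [hf, dif_pos h, this]
  refine ⟨f, ?_⟩
  ext x
  simp only [mem_setOf_eq]
  constructor
  · rintro ⟨M, hM, hMx⟩
    by_contra hxC
    refine hMx Cᶜ hC.isOpen_compl hxC ?_
    have hsub : {s : S | (if s ∈ M then f s else x) ∈ Cᶜ} ⊆ Mᶜ := by
      intro s hs
      simp only [mem_setOf_eq] at hs
      intro hsM
      rw [if_pos hsM] at hs
      exact hs (hfC s)
    exact hK.2.1 (hIK hM) hsub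
  · intro hx
    refine ⟨Set.univ, by simpa using hI.1, fun U hU hxU hmem => ?_⟩
    -- find p with g p ∈ U
    have hcl : (⟨x, hx⟩ : C) ∈ closure D := hDd _
    have hWopen : IsOpen ((Subtype.val : C → X) ⁻¹' U) := hU.preimage continuous_subtype_val
    obtain ⟨d, hdU, hdD⟩ := mem_closure_iff.mp hcl _ hWopen hxU
    rw [hu] at hdD
    obtain ⟨p, hp⟩ := hdD
    have hgp : g p ∈ U := by show (u p : X) ∈ U; rw [hp]; exact hdU
    refine hT p (hK.2.1 hmem fun s hs => ?_)
    simp only [mem_setOf_eq, if_pos (mem_univ s), hfT p s hs]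
    exact hgp
end

section
/- Let A be a compact subset of a topological space X, I and K ideals on a set S, and f : S → X a function. If {s ∈ S : f(s) ∈ A} ∉ K, then A contains at least one I^K-cluster point of f. -/
open Set Topology

attribute [local instance] Classical.propDecidable

variable {S X : Type*}

lemma IsIdeal.biUnion_finset {K : Set (Set S)} (hK : IsIdeal K) {ι : Type*}
    (t : Finset ι) (g : ι → Set S) (hg : ∀ i ∈ t, g i ∈ K) :
    (⋃ i ∈ t, g i) ∈ K := by
  classical
  induction t using Finset.induction_on with
  | empty => simpa using hK.1
  | insert _ _ hx ih =>
    rw [Finset.set_biUnion_insert]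
    exact hK.2.2 (hg _ (Finset.mem_insert_self _ _))
      (ih fun i hi => hg i (Finset.mem_insert_of_mem hi))

theorem compact_meets_IKClusterPts [TopologicalSpace X] (A : Set X) (hA : IsCompact A)
    (I K : Set (Set S)) (hI : IsIdeal I) (hK : IsIdeal K) (f : S → X)
    (hf : {s : S | f s ∈ A} ∉ K) :
    ∃ x ∈ A, IKClusterPt I K f x := by
  by_contra h
  push_neg at h
  -- For each x ∈ A, there is an open U ∋ x with preimage in K
  have key : ∀ x ∈ A, ∃ U : Set X, IsOpen U ∧ x ∈ U ∧ {s : S | f s ∈ U} ∈ K := by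
    intro x hx
    have hnc := h x hx
    rw [IKClusterPt] at hnc
    push_neg at hnc
    have := hnc Set.univ (by simpa using hI.1)
    obtain ⟨U, hUo, hxU, hUK⟩ := this
    refine ⟨U, hUo, hxU, ?_⟩
    simpa using hUK
  choose U hUo hxU hUK using key
  -- compactness: finite subcover over subtype A
  have hcov : A ⊆ ⋃ x : A, U x x.2 := fun y hy =>
    mem_iUnion.2 ⟨⟨y, hy⟩, hxU y hy⟩
  obtain ⟨t, ht⟩ := hA.elim_finite_subcover (fun x : A => U x x.2)
    (fun x => hUo x x.2) hcov
  have hmem : (⋃ x ∈ t, {s : S | f s ∈ U x x.2}) ∈ K :=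
    hK.biUnion_finset t _ fun x _ => hUK x x.2
  apply hf
  refine hK.2.1 hmem ?_
  intro s hs
  have : f s ∈ ⋃ x ∈ t, U x x.2 := ht hs
  simpa [mem_iUnion] using this
end

section
/- Let (X, 𝕌) be a boundedly compact Hausdorff uniform space (every closed bounded set is compact). Then the map Γ sending each bounded sequence x = (x_n) to its set of I^K-cluster points C_x(I^K) is uniformly continuous from the space of bounded sequences with the sup-uniformity to the hyperspace of nonempty compact subsets with the Hausdorff–Bourbaki uniformity. -/
open Set Topology

attribute [local instance] Classical.propDecidable

variable {S X : Type*}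

/-- A sequence is bounded in a uniform space. -/
def BddSeq [UniformSpace X] (x : ℕ → X) : Prop :=
  ∃ a : X, ∃ V ∈ uniformity X, ∀ n, (a, x n) ∈ V

open Uniformity in
private lemma ideal_biUnion {K : Set (Set ℕ)} (hK : IsIdeal K) {ι : Type*} (t : Finset ι)
    (f : ι → Set ℕ) (h : ∀ i ∈ t, f i ∈ K) : (⋃ i ∈ t, f i) ∈ K := by
  classical
  induction t using Finset.induction_on with
  | empty => simpa using hK.1
  | insert _ _ hnot ih =>
    rename_i a s
    rw [Finset.set_biUnion_insert]
    exact hK.2.2 (h _ (Finset.mem_insert_self _ _))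
      (ih fun i hi => h i (Finset.mem_insert_of_mem hi))

open Uniformity SetRel in
private lemma gamma_key [UniformSpace X]
    (hbc : ∀ C : Set X, IsClosed C →
      (∃ a : X, ∃ V ∈ uniformity X, ∀ b ∈ C, (a, b) ∈ V) → IsCompact C)
    {I K : Set (Set ℕ)} (hK : IsIdeal K) {U W : Set (X × X)} (hU : U ∈ uniformity X)
    (hW : W ∈ uniformity X) (hWs : SetRel.IsSymm W)
    (hWU : W ○ W ○ W ⊆ Prod.swap ⁻¹' U) (x y : ℕ → X) (hxy : ∀ n, (x n, y n) ∈ W) :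
    {p : X | IKClusterPt I K x p} ⊆
      {b : X | ∃ c : X, IKClusterPt I K y c ∧ (c, b) ∈ U} := by
  intro p hp
  obtain ⟨M, hM, hP⟩ := hp
  by_cases hMc : Mᶜ ∈ K
  · -- main case
    -- A' : indices in M where x is W-close to p
    set A' : Set ℕ := {s | s ∈ M ∧ (p, x s) ∈ W} with hA'def
    obtain ⟨O, hOsub, hOopen, hpO⟩ :
        ∃ O ⊆ UniformSpace.ball p W, IsOpen O ∧ p ∈ O :=
      mem_nhds_iff.mp (UniformSpace.ball_mem_nhds p hW)
    have hA' : A' ∉ K := by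
      intro h
      apply hP O hOopen hpO
      refine hK.2.1 (hK.2.2 h hMc) ?_
      intro s hs
      by_cases hsM : s ∈ M
      · left
        refine ⟨hsM, ?_⟩
        have : x s ∈ O := by simpa [hsM] using hs
        exact hOsub this
      · exact Or.inr hsM
    set B : Set ℕ := {s | s ∈ M ∧ (p, y s) ∈ W ○ W} with hBdef
    have hB : B ∉ K := by
      intro h
      exact hA' (hK.2.1 h fun s hs => ⟨hs.1, ⟨x s, hs.2, hxy s⟩⟩)
    set D : Set X := y '' B with hDdef
    set C : Set X := closure D with hCdef
    have hDC : D ⊆ C := subset_closure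
    have hCb : ∀ b ∈ C, (p, b) ∈ W ○ W ○ W := by
      intro b hb
      obtain ⟨d, hd1, hd2⟩ := UniformSpace.mem_closure_iff_ball.mp hb hW
      obtain ⟨s, hsB, rfl⟩ := hd2
      exact ⟨y s, hsB.2, (SetRel.comm (R := W)).mp hd1⟩
    have hWWW : W ○ W ○ W ∈ uniformity X := by
      refine Filter.mem_of_superset hW fun q hq => ?_
      exact ⟨q.2, ⟨q.2, (by simpa using hq), refl_mem_uniformity hW⟩, refl_mem_uniformity hW⟩
    have hCcomp : IsCompact C := hbc C isClosed_closure ⟨p, W ○ W ○ W, hWWW, hCb⟩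
    by_cases hex : ∃ c ∈ C, ∀ O : Set X, IsOpen O → c ∈ O → {s | s ∈ M ∧ y s ∈ O} ∉ K
    · obtain ⟨c, hcC, hc⟩ := hex
      refine ⟨c, ⟨M, hM, fun O hO hcO hcon => hc O hO hcO (hK.2.1 hcon fun s hs => ?_)⟩, ?_⟩
      · simpa [hs.1] using hs.2
      · exact hWU (hCb c hcC)
    · exfalso
      push_neg at hex
      choose O hOopen hcO hOK using fun c : C => hex c c.2
      obtain ⟨t, ht⟩ := hCcomp.elim_finite_subcover O hOopen
        (fun c hc => mem_iUnion.mpr ⟨⟨c, hc⟩, hcO ⟨c, hc⟩⟩)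
      apply hB
      have hT : (⋃ i ∈ t, {s | s ∈ M ∧ y s ∈ O i}) ∈ K :=
        ideal_biUnion hK t _ fun i _ => hOK i
      refine hK.2.1 hT fun s hs => ?_
      have : y s ∈ C := hDC ⟨s, hs, rfl⟩
      obtain ⟨i, hit, hyi⟩ := mem_iUnion₂.mp (ht this)
      exact mem_iUnion₂.mpr ⟨i, hit, hs.1, hyi⟩
  · -- Mᶜ ∉ K : every point, in particular p, is a cluster point of y
    refine ⟨p, ⟨M, hM, fun O hO hpO hcon => hMc (hK.2.1 hcon fun s hs => ?_)⟩,
      refl_mem_uniformity hU⟩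
    simp only [mem_setOf_eq, if_neg hs]
    exact hpO

theorem gamma_uniformContinuous [UniformSpace X] [T2Space X]
    (hbc : ∀ C : Set X, IsClosed C →
      (∃ a : X, ∃ V ∈ uniformity X, ∀ b ∈ C, (a, b) ∈ V) → IsCompact C)
    (I K : Set (Set ℕ)) (hI : IsIdeal I) (hK : IsIdeal K) :
    ∀ U ∈ uniformity X, ∃ V ∈ uniformity X, ∀ x y : ℕ → X,
      BddSeq x → BddSeq y → (∀ n, (x n, y n) ∈ V) →
      ({p : X | IKClusterPt I K x p} ⊆
          {b : X | ∃ c : X, IKClusterPt I K y c ∧ (c, b) ∈ U}) ∧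
      ({p : X | IKClusterPt I K y p} ⊆
          {b : X | ∃ c : X, IKClusterPt I K x c ∧ (c, b) ∈ U}) := by
  intro U hU
  have hU' : Prod.swap ⁻¹' U ∈ uniformity X := tendsto_swap_uniformity hU
  obtain ⟨W, hW, hWs, hWU⟩ := comp_comp_symm_mem_uniformity_sets hU'
  refine ⟨W, hW, fun x y _ _ hxy => ?_⟩
  exact ⟨gamma_key hbc hK hU hW hWs hWU x y hxy,
    gamma_key hbc hK hU hW hWs hWU y x fun n => (SetRel.comm (R := W)).mp (hxy n)⟩
end

section
/- If K ⊆ I are ideals on S, then every I^K-Fréchet compact topological space is Fréchet compact (limit point compact). -/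
open Set Topology

attribute [local instance] Classical.propDecidable

variable {S X : Type*}

/-- `f` restricted to `A` is `K/_A`-convergent to `x`. -/
def KConvOn [TopologicalSpace X] (K : Set (Set S)) (A : Set S) (f : S → X) (x : X) : Prop :=
  ∀ U : Set X, IsOpen U → x ∈ U → {s ∈ A | f s ∉ U} ∈ K

/-- `f : A → X` is `(I/_A)^K`-convergent to `x`. -/
def IKConvOn [TopologicalSpace X] (I K : Set (Set S)) (A : Set S) (f : S → X) (x : X) : Prop :=
  ∃ M : Set S, M ⊆ A ∧ A \ M ∈ I ∧
    KConvOn K A (fun s => if s ∈ M then f s else x) x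

/-- The `K`-closure of `C`: points to which some `K`-nonthin function into `C`
`K/_A`-converges. -/
def KClosureSet [TopologicalSpace X] (K : Set (Set S)) (C : Set X) : Set X :=
  {x | ∃ A : Set S, A ∉ K ∧ ∃ f : S → X, (∀ s ∈ A, f s ∈ C) ∧ KConvOn K A f x}

/-- The `I^K`-closure of `C`: points to which some `I`-nonthin function into `C`
`(I/_A)^K`-converges. -/
def IKClosureSet [TopologicalSpace X] (I K : Set (Set S)) (C : Set X) : Set X :=
  {x | ∃ A : Set S, A ∉ I ∧ ∃ f : S → X, (∀ s ∈ A, f s ∈ C) ∧ IKConvOn I K A f x}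

/-- `α` is an `I_{ev}`-limit point of `Y`. -/
def IEvLimitPt [TopologicalSpace X] (I : Set (Set S)) (Y : Set X) (α : X) : Prop :=
  ∃ A : Set S, A ∉ I ∧ ∃ f : S → X, (∀ s ∈ A, f s ∈ Y \ {α}) ∧
    {s ∈ A | f s ≠ α} ∉ I ∧ KConvOn I A f α

/-- `α` is an `I^K_{ev}`-limit point of `Y`. -/
def IKEvLimitPt [TopologicalSpace X] (I K : Set (Set S)) (Y : Set X) (α : X) : Prop :=
  ∃ A : Set S, A ∉ I ∧ ∃ f : S → X, (∀ s ∈ A, f s ∈ Y \ {α}) ∧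
    {s ∈ A | f s ≠ α} ∉ I ∧ IKConvOn I K A f α

/-- `X` is `I`-Fréchet compact. -/
def IFrechetCompact (I : Set (Set S)) (X : Type*) [TopologicalSpace X] : Prop :=
  ∀ Y : Set X, Y.Infinite → ∃ α : X, IEvLimitPt I Y α

/-- `X` is `I^K`-Fréchet compact. -/
def IKFrechetCompact (I K : Set (Set S)) (X : Type*) [TopologicalSpace X] : Prop :=
  ∀ Y : Set X, Y.Infinite → ∃ α : X, IKEvLimitPt I K Y α

theorem IKFrechet_implies_frechet [TopologicalSpace X]
    (I K : Set (Set S)) (hI : IsIdeal I) (hK : IsIdeal K) (hKI : K ⊆ I)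
    (h : IKFrechetCompact I K X) :
    ∀ Y : Set X, Y.Infinite → ∃ α : X, α ∈ closure (Y \ {α}) := by
  intro Y hY
  obtain ⟨α, A, hA, f, hf, -, M, hMA, hAM, hconv⟩ := h Y hY
  refine ⟨α, ?_⟩
  rw [mem_closure_iff]
  intro U hU hαU
  by_contra hemp
  push_neg at hemp
  have hM : M ⊆ {s ∈ A | (if s ∈ M then f s else α) ∉ U} := by
    intro s hs
    refine ⟨hMA hs, ?_⟩
    simp only [hs, if_pos]
    intro hfU
    have := hf s (hMA hs)
    have : f s ∈ U ∩ (Y \ {α}) := ⟨hfU, this⟩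
    rw [hemp] at this
    exact this
  have h1 : M ∈ I := hI.2.1 (hKI (hconv U hU hαU)) hM
  have h2 : A ∈ I := by
    have := hI.2.2 h1 hAM
    have hsub : A ⊆ M ∪ A \ M := by
      intro s hs
      by_cases hsM : s ∈ M
      · exact Or.inl hsM
      · exact Or.inr ⟨hs, hsM⟩
    exact hI.2.1 this hsub
  exact hA h2
end

section
/- If K ⊆ I are ideals on S, then every I^K-Fréchet compact topological space is I-Fréchet compact. -/
open Set Topology

attribute [local instance] Classical.propDecidable

variable {S X : Type*}

theorem IKFrechet_implies_IFrechet [TopologicalSpace X]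
    (I K : Set (Set S)) (hI : IsIdeal I) (hK : IsIdeal K) (hKI : K ⊆ I)
    (h : IKFrechetCompact I K X) : IFrechetCompact I X := by
  intro Y hY
  obtain ⟨α, A, hA, f, hf, hne, M, hM, hAM, hconv⟩ := h Y hY
  refine ⟨α, A, hA, f, hf, hne, ?_⟩
  intro U hU hα
  have hsub : {s ∈ A | f s ∉ U} ⊆ {s ∈ A | (if s ∈ M then f s else α) ∉ U} ∪ (A \ M) := by
    intro s hs
    by_cases hsM : s ∈ M
    · exact Or.inl ⟨hs.1, by simpa [hsM] using hs.2⟩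
    · exact Or.inr ⟨hs.1, hsM⟩
  exact hI.2.1 (hI.2.2 (hKI (hconv U hU hα)) hAM) hsub
end

section
/- Let ℕ = ⋃_j Δ_j be a partition of ℕ into infinitely many pairwise disjoint infinite sets. Let I = {A ⊆ ℕ : A ∩ Δ_i is finite for all but finitely many i} and let K = {A ⊆ ℕ : A intersects at most finitely many Δ_j}. Then I satisfies shrinking condition A(I, K): for every sequence (A_i) of subsets of ℕ with A_i ∉ I for each i, there exist sets B_i ∈ K with B_i ⊆ A_i and ⋃_i B_i ∉ I. -/
open Set Topology

attribute [local instance] Classical.propDecidable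

variable {S X : Type*}

theorem shrinking_condition_example
    (Δ : ℕ → Set ℕ) (hinf : ∀ j, (Δ j).Infinite)
    (hdisj : ∀ i j, i ≠ j → Δ i ∩ Δ j = ∅) (hcov : (⋃ j, Δ j) = Set.univ) :
    ∀ A : ℕ → Set ℕ,
      (∀ i, A i ∉ {B : Set ℕ | {j : ℕ | (B ∩ Δ j).Infinite}.Finite}) →
      ∃ B : ℕ → Set ℕ,
        (∀ i, B i ∈ {B' : Set ℕ | {j : ℕ | (B' ∩ Δ j).Nonempty}.Finite} ∧ B i ⊆ A i) ∧
        (⋃ i, B i) ∉ {B' : Set ℕ | {j : ℕ | (B' ∩ Δ j).Infinite}.Finite} := by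
  intro A hA
  have hS : ∀ i, {j | (A i ∩ Δ j).Infinite}.Infinite := fun i => hA i
  choose g hg1 hg2 using fun (i b : ℕ) => (hS i).exists_gt b
  let f : ℕ → ℕ := fun i => Nat.rec (g 0 0) (fun n fn => g (n+1) fn) i
  have hfmem : ∀ i, (A i ∩ Δ (f i)).Infinite := by
    intro i
    cases i with
    | zero => exact hg1 0 0
    | succ n => exact hg1 (n+1) _
  have hfmono : StrictMono f := strictMono_nat_of_lt_succ (fun n => hg2 (n+1) _)
  refine ⟨fun i => A i ∩ Δ (f i), fun i => ⟨?_, inter_subset_left⟩, ?_⟩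
  · apply Set.Finite.subset (Set.finite_singleton (f i))
    intro j hj
    by_contra hne
    have : (A i ∩ Δ (f i)) ∩ Δ j ⊆ Δ (f i) ∩ Δ j := by
      intro x hx; exact ⟨hx.1.2, hx.2⟩
    rw [hdisj (f i) j (Ne.symm hne)] at this
    exact hj.ne_empty (Set.subset_empty_iff.mp this)
  · intro hfin
    have hsub : Set.range f ⊆ {j | ((⋃ i, A i ∩ Δ (f i)) ∩ Δ j).Infinite} := by
      rintro _ ⟨i, rfl⟩
      apply Set.Infinite.mono _ (hfmem i)
      intro x hx
      exact ⟨Set.mem_iUnion.mpr ⟨i, hx⟩, hx.2⟩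
    exact (Set.infinite_range_of_injective hfmono.injective) (hfin.subset hsub)
end

section
/- Let X be a first countable topological space and I, K admissible ideals on S. If shrinking condition A(I, K) holds, then X is I-Fréchet compact implies X is I^K-Fréchet compact. -/
open Set Topology

attribute [local instance] Classical.propDecidable

variable {S X : Type*}

lemma ideal_biUnion_lt {K : Set (Set S)} (hK : IsIdeal K) (T : ℕ → Set S)
    (hT : ∀ i, T i ∈ K) (n : ℕ) : (⋃ i < n, T i) ∈ K := by
  induction n with
  | zero => simpa using hK.1
  | succ n ih =>
    have he : (⋃ i < n + 1, T i) = (⋃ i < n, T i) ∪ T n := by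
      ext x
      simp only [Set.mem_iUnion, Set.mem_union, Nat.lt_succ_iff_lt_or_eq]
      constructor
      · rintro ⟨i, (hi | rfl), hx⟩
        · exact Or.inl ⟨i, hi, hx⟩
        · exact Or.inr hx
      · rintro (⟨i, hi, hx⟩ | hx)
        · exact ⟨i, Or.inl hi, hx⟩
        · exact ⟨n, Or.inr rfl, hx⟩
    rw [he]; exact hK.2.2 ih (hT n)

theorem IFrechet_implies_IKFrechet_of_shrinking [TopologicalSpace X]
    [FirstCountableTopology X]
    (I K : Set (Set S)) (hI : IsAdmissible I) (hK : IsAdmissible K)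
    (hshrink : ∀ A : ℕ → Set S, (∀ i, A i ∉ I) →
      ∃ B : ℕ → Set S, (∀ i, B i ∈ K ∧ B i ⊆ A i) ∧ (⋃ i, B i) ∉ I)
    (h : IFrechetCompact I X) : IKFrechetCompact I K X := by
  intro Y hY
  obtain ⟨α, A, hA, f, hfY, hne, hconv⟩ := h Y hY
  obtain ⟨U, hU⟩ := (𝓝 α).exists_antitone_basis
  set V : ℕ → Set X := fun n => interior (U n) with hV
  have hVopen : ∀ n, IsOpen (V n) := fun n => isOpen_interior
  have hαV : ∀ n, α ∈ V n := fun n => mem_interior_iff_mem_nhds.2 (hU.mem n)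
  set C : ℕ → Set S := fun n => {s ∈ A | f s ∈ V n} with hC
  have hCI : ∀ n, C n ∉ I := by
    intro n hn
    have h1 : {s ∈ A | f s ∉ V n} ∈ I := hconv (V n) (hVopen n) (hαV n)
    have hsub : A ⊆ C n ∪ {s ∈ A | f s ∉ V n} := by
      intro s hs
      by_cases hf : f s ∈ V n
      · exact Or.inl ⟨hs, hf⟩
      · exact Or.inr ⟨hs, hf⟩
    exact hA (hI.1.2.1 (hI.1.2.2 hn h1) hsub)
  obtain ⟨B, hB, hM⟩ := hshrink C hCI
  set M : Set S := ⋃ i, B i with hMdef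
  have hMA : M ⊆ A := by
    rintro s hs
    obtain ⟨i, hi⟩ := Set.mem_iUnion.1 hs
    exact ((hB i).2 hi).1
  refine ⟨α, M, hM, f, fun s hs => hfY s (hMA hs), ?_, M, subset_rfl, by simp [hI.1.1], ?_⟩
  · intro hcon
    refine hM (hI.1.2.1 hcon ?_)
    intro s hs
    exact ⟨hs, fun hfa => (hfY s (hMA hs)).2 hfa⟩
  · intro W hW hαW
    obtain ⟨n, -, hn⟩ := hU.toHasBasis.mem_iff.1 (hW.mem_nhds hαW)
    have hsub : {s ∈ M | (if s ∈ M then f s else α) ∉ W} ⊆ ⋃ i < n, B i := by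
      rintro s ⟨hsM, hsW⟩
      rw [if_pos hsM] at hsW
      obtain ⟨i, hi⟩ := Set.mem_iUnion.1 hsM
      have hin : i < n := by
        by_contra hge
        push_neg at hge
        have : f s ∈ U i := interior_subset ((hB i).2 hi).2
        exact hsW (hn (hU.antitone hge this))
      exact Set.mem_iUnion.2 ⟨i, Set.mem_iUnion.2 ⟨hin, hi⟩⟩
    exact hK.1.2.1 (ideal_biUnion_lt hK.1 B (fun i => (hB i).1) n) hsub
end

section
/- For any ideal I on ω, every first countable Fréchet compact (limit point compact) T₁ topological space is I-Fréchet compact. -/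
open Set Topology

attribute [local instance] Classical.propDecidable

variable {S X : Type*}

theorem frechet_implies_IFrechet_of_T1 [TopologicalSpace X]
    [FirstCountableTopology X] [T1Space X]
    (I : Set (Set ℕ)) (hI : IsAdmissible I)
    (h : ∀ Y : Set X, Y.Infinite → ∃ α : X, α ∈ closure (Y \ {α})) :
    IFrechetCompact I X := by
  obtain ⟨⟨hempty, hdown, hunion⟩, huniv, hsingle⟩ := hI
  have hfin : ∀ A : Set ℕ, A.Finite → A ∈ I := by
    intro A hA
    refine Set.Finite.induction_on A hA hempty ?_
    intro a s _ _ hs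
    have := hunion (hsingle a) hs
    simpa using this
  intro Y hY
  obtain ⟨α, hα⟩ := h Y hY
  obtain ⟨f, hf, hconv⟩ := mem_closure_iff_seq_limit.mp hα
  refine ⟨α, Set.univ, huniv, f, fun s _ => hf s, ?_, ?_⟩
  · have : {s ∈ (Set.univ : Set ℕ) | f s ≠ α} = Set.univ := by
      ext s
      simpa using (hf s).2
    rw [this]; exact huniv
  · intro U hU hαU
    have : ∀ᶠ n in Filter.atTop, f n ∈ U :=
      hconv (hU.mem_nhds hαU)
    obtain ⟨N, hN⟩ := Filter.eventually_atTop.mp this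
    apply hdown (hfin {n | n < N} (Set.finite_Iio N))
    intro s hs
    simp only [Set.mem_setOf_eq, Set.mem_sep_iff] at hs ⊢
    by_contra hlt
    exact hs.2 (hN s (le_of_not_gt hlt))
end

section
/- Every I^K-closed subset of an I^K-Fréchet compact topological space is I^K-Fréchet compact (in the subspace topology). -/
open Set Topology

attribute [local instance] Classical.propDecidable

variable {S X : Type*}

theorem IKClosed_subset_IKFrechet [TopologicalSpace X]
    (I K : Set (Set S)) (hI : IsIdeal I) (hK : IsIdeal K)
    (h : IKFrechetCompact I K X)
    (Y : Set X) (hY : IKClosureSet I K Y = Y) :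
    ∀ A : Set X, A ⊆ Y → A.Infinite → ∃ α ∈ Y, IKEvLimitPt I K A α := by
  intro A hAY hAinf
  obtain ⟨α, hα⟩ := h A hAinf
  refine ⟨α, ?_, hα⟩
  obtain ⟨A₀, hA₀, f, hf, _, hconv⟩ := hα
  rw [← hY]
  exact ⟨A₀, hA₀, f, fun s hs => hAY (hf s hs).1, hconv⟩
end

section
/- Every I-sequential Hausdorff Fréchet compact (limit point compact) topological space is I-Fréchet compact. -/
open Set Topology

attribute [local instance] Classical.propDecidable

variable {S X : Type*}

/-- `X` is `I`-sequential: every `I`-closed set is closed. -/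
def ISequential (I : Set (Set S)) (X : Type*) [TopologicalSpace X] : Prop :=
  ∀ C : Set X, KClosureSet I C = C → IsClosed C

theorem ISequential_frechet_implies_IFrechet [TopologicalSpace X] [T2Space X]
    (I : Set (Set S)) (hI : IsAdmissible I)
    (hseq : ISequential I X)
    (hLPC : ∀ Y : Set X, Y.Infinite → ∃ α : X, α ∈ closure (Y \ {α})) :
    IFrechetCompact I X := by
  intro Y hY
  by_contra h
  push_neg at h
  have hclosed : ∀ C : Set X, C ⊆ Y → IsClosed C := by
    intro C hC
    apply hseq
    apply Set.Subset.antisymm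
    · intro x hx
      obtain ⟨A, hA, f, hf, hconv⟩ := hx
      by_contra hxC
      refine h x ⟨A, hA, f, fun s hs => ⟨hC (hf s hs), fun he => hxC ?_⟩, ?_, hconv⟩
      · simp only [Set.mem_singleton_iff] at he
        exact he ▸ hf s hs
      · have hEq : {s ∈ A | f s ≠ x} = A := by
          ext s
          simp only [Set.mem_setOf_eq]
          exact ⟨fun hh => hh.1, fun hs => ⟨hs, fun he => hxC (he ▸ hf s hs)⟩⟩
        rw [hEq]; exact hA
    · intro x hx
      refine ⟨Set.univ, hI.2.1, fun _ => x, fun s _ => hx, ?_⟩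
      intro U hU hxU
      have hEq : {s ∈ (Set.univ : Set S) | (fun _ : S => x) s ∉ U} = ∅ := by
        ext s; simp [hxU]
      rw [hEq]; exact hI.1.1
  obtain ⟨α, hα⟩ := hLPC Y hY
  have := (hclosed (Y \ {α}) Set.diff_subset).closure_subset hα
  exact this.2 rfl
end
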